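/- For each integer m ≥ 1 let T_m be the linear map on ℝ² (equipped with the maximum norm) given by the matrix (1/2) · [[1/m, 2 − 1/m], [2 − 1/m, 1/m]], and let U be given by the matrix (1/2) · [[1, 1], [1, 1]]. Let X be the Banach space of bounded ℝ²-valued sequences (x_m)_{m≥1} with the supremum norm, ordered componentwise, and define T : X → X by (T x)_m = T_m(x_m) and 𝒰 : X → X by (𝒰 x)_m = U(x_m). Then T is a positive bounded linear operator with ‖T‖ ≤ 1, and the Cesàro means (1/n) · Σ_{k=0}^{n-1} T^k converge to 𝒰 in the operator norm as n → ∞. -/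

import Mathlib

set_option maxHeartbeats 1000000

open Filter BoundedContinuousFunction

noncomputable def lamAux (m : ℕ) : ℝ := 1 / (m + 1 : ℝ) - 1

lemma lamAux_bounds (m : ℕ) : -1 < lamAux m ∧ lamAux m ≤ 0 := by
  have h0 : (0 : ℝ) < (m : ℝ) + 1 := by positivity
  constructor
  · have : 0 < 1 / ((m : ℝ) + 1) := by positivity
    simp only [lamAux]; linarith
  · have : 1 / ((m : ℝ) + 1) ≤ 1 := by
      rw [div_le_one h0]; linarith
    simp only [lamAux]; linarith

lemma geom_abs_le (m n : ℕ) : |∑ k ∈ Finset.range n, (lamAux m) ^ k| ≤ 2 := by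
  obtain ⟨h1, h2⟩ := lamAux_bounds m
  have hne : lamAux m ≠ 1 := by linarith
  rw [geom_sum_eq hne, abs_div]
  have habs : |lamAux m| ≤ 1 := by rw [abs_le]; constructor <;> linarith
  have hpow : |lamAux m ^ n| ≤ 1 := by rw [abs_pow]; exact pow_le_one₀ (abs_nonneg _) habs
  have hnum : |lamAux m ^ n - 1| ≤ 2 := by
    have := abs_le.1 hpow; rw [abs_le]; constructor <;> linarith
  have hden : (1 : ℝ) ≤ |lamAux m - 1| := by
    rw [abs_of_nonpos (by linarith)]; linarith
  calc |lamAux m ^ n - 1| / |lamAux m - 1| ≤ 2 / 1 := by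
        apply div_le_div₀ (by norm_num) hnum (by norm_num) hden
    _ = 2 := by norm_num

/-- For `m ≥ 1` let `T_m` act on `ℝ²` (max norm) by the matrix
`(1/2) · [[1/m, 2 − 1/m], [2 − 1/m, 1/m]]` and let `U` be given by
`(1/2) · [[1, 1], [1, 1]]`. On the space `X` of bounded `ℝ²`-valued sequences with the
supremum norm (modelled as `ℕ →ᵇ (ℝ × ℝ)`, the index `m ∈ ℕ` corresponding to `m + 1`),
let `T` act coordinatewise by `T_{m+1}` and `𝒰` coordinatewise by `U`. Then `T` is a
positive bounded linear operator with `‖T‖ ≤ 1` and the Cesàro means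
`(1/n) ∑_{k<n} T^k` converge to `𝒰` in the operator norm. -/
theorem cesaro_means_converge_uniformly_for_direct_sum_operator
    (T U : (ℕ →ᵇ (ℝ × ℝ)) →L[ℝ] (ℕ →ᵇ (ℝ × ℝ)))
    (hT : ∀ (x : ℕ →ᵇ (ℝ × ℝ)) (m : ℕ),
      (T x m).1 = (1 / 2) * ((1 / (m + 1 : ℝ)) * (x m).1 + (2 - 1 / (m + 1 : ℝ)) * (x m).2) ∧
      (T x m).2 = (1 / 2) * ((2 - 1 / (m + 1 : ℝ)) * (x m).1 + (1 / (m + 1 : ℝ)) * (x m).2))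
    (hU : ∀ (x : ℕ →ᵇ (ℝ × ℝ)) (m : ℕ),
      (U x m).1 = (1 / 2) * ((x m).1 + (x m).2) ∧
      (U x m).2 = (1 / 2) * ((x m).1 + (x m).2)) :
    (∀ x : ℕ →ᵇ (ℝ × ℝ), (∀ m : ℕ, 0 ≤ (x m).1 ∧ 0 ≤ (x m).2) →
      ∀ m : ℕ, 0 ≤ (T x m).1 ∧ 0 ≤ (T x m).2) ∧
    ‖T‖ ≤ 1 ∧
    Tendsto (fun n : ℕ => (n : ℝ)⁻¹ • ∑ k ∈ Finset.range n, T ^ k) atTop (nhds U) := by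
  have ha : ∀ m : ℕ, 0 < 1 / ((m : ℝ) + 1) ∧ 1 / ((m : ℝ) + 1) ≤ 1 := by
    intro m
    have h0 : (0 : ℝ) < (m : ℝ) + 1 := by positivity
    exact ⟨by positivity, by rw [div_le_one h0]; linarith⟩
  have key : ∀ (k : ℕ) (x : ℕ →ᵇ (ℝ × ℝ)) (m : ℕ),
      ((T ^ k) x m).1 + ((T ^ k) x m).2 = (x m).1 + (x m).2 ∧
      ((T ^ k) x m).1 - ((T ^ k) x m).2 = (lamAux m) ^ k * ((x m).1 - (x m).2) := by
    intro k
    induction k with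
    | zero => intro x m; simp
    | succ k ih =>
      intro x m
      have hpow : (T ^ (k + 1)) x = (T ^ k) (T x) := by
        rw [pow_succ, ContinuousLinearMap.mul_apply]
      obtain ⟨hs, hd⟩ := ih (T x) m
      obtain ⟨h1, h2⟩ := hT x m
      rw [hpow]
      constructor
      · rw [hs, h1, h2]; ring
      · rw [hd, h1, h2, lamAux]; ring
  refine ⟨?_, ?_, ?_⟩
  · -- positivity
    intro x hx m
    obtain ⟨h1, h2⟩ := hT x m
    obtain ⟨hx1, hx2⟩ := hx m
    obtain ⟨ha1, ha2⟩ := ha m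
    constructor
    · rw [h1]; nlinarith
    · rw [h2]; nlinarith
  · -- norm bound
    apply ContinuousLinearMap.opNorm_le_bound T zero_le_one
    intro x
    rw [one_mul]
    refine (norm_le (norm_nonneg x)).2 (fun m => ?_)
    have hx1 : |(x m).1| ≤ ‖x‖ := by
      have := (norm_fst_le (x m)).trans (x.norm_coe_le_norm m)
      simpa [Real.norm_eq_abs] using this
    have hx2 : |(x m).2| ≤ ‖x‖ := by
      have := (norm_snd_le (x m)).trans (x.norm_coe_le_norm m)
      simpa [Real.norm_eq_abs] using this
    obtain ⟨h1, h2⟩ := hT x m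
    obtain ⟨ha1, ha2⟩ := ha m
    have hb1 := abs_le.1 hx1
    have hb2 := abs_le.1 hx2
    rw [Prod.norm_def, max_le_iff, Real.norm_eq_abs, Real.norm_eq_abs, h1, h2]
    constructor <;> rw [abs_le] <;> constructor <;> nlinarith
  · -- Cesàro convergence
    refine (tendsto_iff_norm_sub_tendsto_zero
      (f := fun n : ℕ => (n : ℝ)⁻¹ • ∑ k ∈ Finset.range n, T ^ k) (b := U)).mpr ?_
    have hbound : ∀ n : ℕ, 1 ≤ n →
        ‖(n : ℝ)⁻¹ • ∑ k ∈ Finset.range n, T ^ k - U‖ ≤ 2 * (n : ℝ)⁻¹ := by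
      intro n hn
      have hn0 : ((n : ℝ)) ≠ 0 := by positivity
      have hninv : (0 : ℝ) ≤ (n : ℝ)⁻¹ := by positivity
      apply ContinuousLinearMap.opNorm_le_bound _ (by positivity)
      intro x
      refine (norm_le (by positivity)).2 (fun m => ?_)
      have hx1 : |(x m).1| ≤ ‖x‖ := by
        have := (norm_fst_le (x m)).trans (x.norm_coe_le_norm m)
        simpa [Real.norm_eq_abs] using this
      have hx2 : |(x m).2| ≤ ‖x‖ := by
        have := (norm_snd_le (x m)).trans (x.norm_coe_le_norm m)
        simpa [Real.norm_eq_abs] using this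
      set s := (x m).1 + (x m).2 with hs
      set d := (x m).1 - (x m).2 with hd
      set c := ∑ k ∈ Finset.range n, (lamAux m) ^ k with hc
      have e2 : ∀ k, ((T ^ k) x m).1 = (s + (lamAux m) ^ k * d) / 2 := by
        intro k; obtain ⟨hk1, hk2⟩ := key k x m; rw [hs, hd] at *; linarith
      have e3 : ∀ k, ((T ^ k) x m).2 = (s - (lamAux m) ^ k * d) / 2 := by
        intro k; obtain ⟨hk1, hk2⟩ := key k x m; rw [hs, hd] at *; linarith
      have hsum1 : ∑ k ∈ Finset.range n, (s + lamAux m ^ k * d) / 2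
          = ((n : ℝ) * s + c * d) / 2 := by
        rw [← Finset.sum_div, Finset.sum_add_distrib, Finset.sum_const, Finset.card_range,
          ← Finset.sum_mul, hc, nsmul_eq_mul]
      have hsum2 : ∑ k ∈ Finset.range n, (s - lamAux m ^ k * d) / 2
          = ((n : ℝ) * s - c * d) / 2 := by
        rw [← Finset.sum_div, Finset.sum_sub_distrib, Finset.sum_const, Finset.card_range,
          ← Finset.sum_mul, hc, nsmul_eq_mul]
      have hval1 : (((n : ℝ)⁻¹ • ∑ k ∈ Finset.range n, T ^ k - U) x m).1
          = (n : ℝ)⁻¹ * c * d / 2 := by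
        have e1 : (((n : ℝ)⁻¹ • ∑ k ∈ Finset.range n, T ^ k - U) x m).1
            = (n : ℝ)⁻¹ * (∑ k ∈ Finset.range n, ((T ^ k) x m).1) - (U x m).1 := by
          simp [ContinuousLinearMap.sub_apply, ContinuousLinearMap.smul_apply,
            ContinuousLinearMap.sum_apply, Finset.sum_apply, Prod.fst_sum, mul_comm]
        rw [e1, (hU x m).1]
        simp only [e2]
        rw [hsum1, ← hs]
        field_simp
        ring
      have hval2 : (((n : ℝ)⁻¹ • ∑ k ∈ Finset.range n, T ^ k - U) x m).2
          = -((n : ℝ)⁻¹ * c * d / 2) := by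
        have e1 : (((n : ℝ)⁻¹ • ∑ k ∈ Finset.range n, T ^ k - U) x m).2
            = (n : ℝ)⁻¹ * (∑ k ∈ Finset.range n, ((T ^ k) x m).2) - (U x m).2 := by
          simp [ContinuousLinearMap.sub_apply, ContinuousLinearMap.smul_apply,
            ContinuousLinearMap.sum_apply, Finset.sum_apply, Prod.snd_sum, mul_comm]
        rw [e1, (hU x m).2]
        simp only [e3]
        rw [hsum2, ← hs]
        field_simp
        ring
      have hcabs : |c| ≤ 2 := geom_abs_le m n
      have hdabs : |d| ≤ 2 * ‖x‖ := by
        have h1 := abs_le.1 hx1; have h2 := abs_le.1 hx2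
        rw [hd, abs_le]; constructor <;> linarith
      have hmain : |(n : ℝ)⁻¹ * c * d / 2| ≤ 2 * (n : ℝ)⁻¹ * ‖x‖ := by
        rw [abs_div, abs_mul, abs_mul, abs_of_nonneg hninv, abs_two]
        have h1 : |c| * |d| ≤ 4 * ‖x‖ := by nlinarith [abs_nonneg c, abs_nonneg d]
        nlinarith [mul_le_mul_of_nonneg_left h1 hninv]
      rw [Prod.norm_def, hval1, hval2, Real.norm_eq_abs, Real.norm_eq_abs, abs_neg]
      exact max_le hmain hmain
    have h2n : Tendsto (fun n : ℕ => 2 * (n : ℝ)⁻¹) atTop (nhds 0) := by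
      have : Tendsto (fun n : ℕ => ((n : ℝ))⁻¹) atTop (nhds 0) :=
        tendsto_inv_atTop_zero.comp tendsto_natCast_atTop_atTop
      simpa using this.const_mul 2
    refine squeeze_zero' (Eventually.of_forall fun n => norm_nonneg ((n : ℝ)⁻¹ • ∑ k ∈ Finset.range n, T ^ k - U)) ?_ h2n
    exact eventually_atTop.2 ⟨1, hbound⟩
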